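/- arXiv:1309.6113 — 3 statements merged into one kernel-verified Lean document; each statement's English description precedes it below -/
import Mathlib

section
/- For a C² function v on a planar domain with complex gradient f = (v_x - i v_y)/2, at points where f ≠ 0 one has div(|∇v|^{p-2} ∇v) = 2^{p-2} |f|^{p-2} ( 2p f_{\bar z} + (p-2)( (f/\bar f) \overline{f_z} + (\bar f/f) f_z ) ). -/
/-- For a C² function `v` on a planar domain with complex gradient
`f = (v_x - i v_y)/2`, at points where `f ≠ 0` one has
`div(|∇v|^{p-2} ∇v) = 2^{p-2} |f|^{p-2} (2p f_z̄ + (p-2)((f/conj f) conj f_z + (conj f/f) f_z))`.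
The divergence is represented as `a + b` as in the p-Laplacian statement; by C²
regularity `f_z = (v_xx - v_yy - 2 i v_xy)/4` and `f_z̄ = Δv/4`. -/
theorem p_laplacian_complex_representation
    (p : ℝ) (hp : 1 < p)
    (v vx vy vxx vxy vyy : ℝ → ℝ → ℝ)
    (hvx : ∀ x y, HasDerivAt (fun t => v t y) (vx x y) x)
    (hvy : ∀ x y, HasDerivAt (fun t => v x t) (vy x y) y)
    (hvxx : ∀ x y, HasDerivAt (fun t => vx t y) (vxx x y) x)
    (hvxy : ∀ x y, HasDerivAt (fun t => vx x t) (vxy x y) y)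
    (hvyx : ∀ x y, HasDerivAt (fun t => vy t y) (vxy x y) x)
    (hvyy : ∀ x y, HasDerivAt (fun t => vy x t) (vyy x y) y)
    (x y : ℝ) (f fz fzb : ℂ)
    (hf : f = ((vx x y : ℂ) - Complex.I * (vy x y : ℂ)) / 2)
    (hf0 : f ≠ 0)
    (hfz : fz = ((vxx x y : ℂ) - (vyy x y : ℂ) - 2 * Complex.I * (vxy x y : ℂ)) / 4)
    (hfzb : fzb = ((vxx x y : ℂ) + (vyy x y : ℂ)) / 4)
    (a b : ℝ)
    (ha : HasDerivAt (fun t => ((vx t y) ^ 2 + (vy t y) ^ 2) ^ ((p - 2) / 2) * vx t y) a x)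
    (hb : HasDerivAt (fun t => ((vx x t) ^ 2 + (vy x t) ^ 2) ^ ((p - 2) / 2) * vy x t) b y) :
    ((a + b : ℝ) : ℂ)
      = (((2 : ℝ) ^ (p - 2) * ‖f‖ ^ (p - 2) : ℝ) : ℂ)
        * (2 * (p : ℂ) * fzb
          + ((p : ℂ) - 2) * ((f / (starRingEnd ℂ) f) * (starRingEnd ℂ) fz
              + ((starRingEnd ℂ) f / f) * fz)) := by
  set q := vx x y with hq
  set r := vy x y with hr
  set s := vxx x y with hs
  set t := vxy x y with ht
  set u := vyy x y with hu
  -- f ≠ 0 gives q² + r² > 0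
  have hqr : ¬ (q = 0 ∧ r = 0) := by
    rintro ⟨h1, h2⟩
    apply hf0
    rw [hf, h1, h2]
    simp
  have hW : (0:ℝ) < q ^ 2 + r ^ 2 := by
    rcases not_and_or.mp hqr with h | h <;> positivity
  set W : ℝ := q ^ 2 + r ^ 2 with hWdef
  set X : ℝ := W ^ ((p - 2) / 2) with hX
  -- compute a
  have hga : HasDerivAt (fun t' => (vx t' y) ^ 2 + (vy t' y) ^ 2)
      (2 * q * s + 2 * r * t) x := by
    have h1 := ((hvxx x y).fun_pow 2)
    have h2 := ((hvyx x y).fun_pow 2)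
    have := h1.fun_add h2
    refine this.congr_deriv ?_
    push_cast
    ring
  have harp : HasDerivAt (fun t' => ((vx t' y) ^ 2 + (vy t' y) ^ 2) ^ ((p - 2) / 2))
      ((2 * q * s + 2 * r * t) * ((p - 2) / 2) * W ^ ((p - 2) / 2 - 1)) x :=
    hga.rpow_const (Or.inl hW.ne')
  have ha' : a = (2 * q * s + 2 * r * t) * ((p - 2) / 2) * W ^ ((p - 2) / 2 - 1) * q
      + X * s := by
    have := (harp.mul (hvxx x y)).unique ha
    rw [← this]
  -- compute b
  have hgb : HasDerivAt (fun t' => (vx x t') ^ 2 + (vy x t') ^ 2)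
      (2 * q * t + 2 * r * u) y := by
    have h1 := ((hvxy x y).fun_pow 2)
    have h2 := ((hvyy x y).fun_pow 2)
    have := h1.fun_add h2
    refine this.congr_deriv ?_
    push_cast
    ring
  have hbrp : HasDerivAt (fun t' => ((vx x t') ^ 2 + (vy x t') ^ 2) ^ ((p - 2) / 2))
      ((2 * q * t + 2 * r * u) * ((p - 2) / 2) * W ^ ((p - 2) / 2 - 1)) y :=
    hgb.rpow_const (Or.inl hW.ne')
  have hb' : b = (2 * q * t + 2 * r * u) * ((p - 2) / 2) * W ^ ((p - 2) / 2 - 1) * r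
      + X * u := by
    have := (hbrp.mul (hvyy x y)).unique hb
    rw [← this]
  -- rewrite the lower-order rpow
  have hWpow : W ^ ((p - 2) / 2 - 1) = X / W := by
    rw [hX, Real.rpow_sub hW, Real.rpow_one]
  -- coefficient identity
  have habs : (2 : ℝ) ^ (p - 2) * ‖f‖ ^ (p - 2) = X := by
    have h1 : ‖f‖ = Real.sqrt W / 2 := by
      rw [hf, norm_div, Complex.norm_two, Complex.norm_def, Complex.normSq_apply]
      simp [hWdef]
      ring_nf
    rw [h1, Real.div_rpow (Real.sqrt_nonneg _) (by norm_num),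
      Real.sqrt_eq_rpow, ← Real.rpow_mul hW.le, hX]
    field_simp
  rw [habs]
  -- nonvanishing facts in ℂ
  have hden : ((q : ℂ) - Complex.I * r) ≠ 0 := by
    intro h
    apply hf0
    rw [hf, h]
    simp
  have hdenc : ((q : ℂ) + Complex.I * r) ≠ 0 := by
    intro h
    have : ((q : ℂ) - Complex.I * r) * ((q : ℂ) + Complex.I * r) = (W : ℂ) := by
      push_cast [hWdef]
      ring_nf
      rw [Complex.I_sq]
      ring
    rw [h, mul_zero] at this
    have hW0 : (W : ℂ) ≠ 0 := by exact_mod_cast hW.ne'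
    exact hW0 this.symm
  have hW0 : (W : ℂ) ≠ 0 := by exact_mod_cast hW.ne'
  -- conjugates
  have hcf : (starRingEnd ℂ) f = ((q : ℂ) + Complex.I * r) / 2 := by
    rw [hf]
    simp [map_div₀, Complex.conj_I, map_ofNat]
  have hcfz : (starRingEnd ℂ) fz = ((s : ℂ) - u + 2 * Complex.I * t) / 4 := by
    rw [hfz]
    simp [map_div₀, Complex.conj_I, map_ofNat]
  rw [ha', hb', hWpow, hcf, hcfz, hf, hfz, hfzb]
  have hf2 : ((q : ℂ) - Complex.I * r) / 2 ≠ 0 := by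
    simpa [hf] using hf0
  have hcf2 : ((q : ℂ) + Complex.I * r) / 2 ≠ 0 := by
    intro h
    exact hdenc (by field_simp at h; simpa using h)
  have hW0' : ((q : ℂ)) ^ 2 + ((r : ℂ)) ^ 2 ≠ 0 := by
    rw [show ((q : ℂ) ^ 2 + (r : ℂ) ^ 2) = ((W : ℝ) : ℂ) by push_cast [hWdef]; ring]
    exact hW0
  push_cast [hWdef]
  field_simp [hW0']
  rw [show ((q : ℂ) - r * Complex.I) * (q + r * Complex.I) = (q : ℂ) ^ 2 + r ^ 2 by
    ring_nf; rw [Complex.I_sq]; ring]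
  field_simp
  ring_nf
  simp only [Complex.I_sq]
  ring
end

section
/- Let u = (u¹, u²) be a C² p-harmonic map on a planar domain, i.e., div(|Du|^{p-2} ∇u¹) = 0 and div(|Du|^{p-2} ∇u²) = 0 where |Du|² = |∇u¹|² + |∇u²|². Then at points where ∇u¹ ≠ 0 and ∇u² ≠ 0: |∇u¹|^{4-p} Δ_p u¹ + |∇u²|² Δu¹ + ((p-2)/2) ⟨∇u¹, ∇|∇u²|²⟩ = 0, and symmetrically with indices 1 and 2 swapped. -/
/-- Algebraic core: dividing the expanded p-harmonic equation by `w^((p-2)/2-1)`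
and comparing with the expanded 2-Laplacian-type expression. -/
lemma p_harm_key_alg (p A B C D uxx uxy uyy vxx vxy vyy w : ℝ)
    (hs1 : 0 < A ^ 2 + B ^ 2) (hw0 : 0 < w)
    (hw : w = A ^ 2 + B ^ 2 + C ^ 2 + D ^ 2)
    (H : ((2 * A * uxx + 2 * B * uxy + 2 * C * vxx + 2 * D * vxy) * ((p - 2) / 2)
            * w ^ ((p - 2) / 2 - 1)) * A + w ^ ((p - 2) / 2) * uxx
        + (((2 * A * uxy + 2 * B * uyy + 2 * C * vxy + 2 * D * vyy) * ((p - 2) / 2)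
            * w ^ ((p - 2) / 2 - 1)) * B + w ^ ((p - 2) / 2) * uyy) = 0) :
    (A ^ 2 + B ^ 2) ^ ((4 - p) / 2) *
      ((((2 * A * uxx + 2 * B * uxy) * ((p - 2) / 2) * (A ^ 2 + B ^ 2) ^ ((p - 2) / 2 - 1)) * A
          + (A ^ 2 + B ^ 2) ^ ((p - 2) / 2) * uxx)
        + (((2 * A * uxy + 2 * B * uyy) * ((p - 2) / 2) * (A ^ 2 + B ^ 2) ^ ((p - 2) / 2 - 1)) * B
          + (A ^ 2 + B ^ 2) ^ ((p - 2) / 2) * uyy))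
      + (C ^ 2 + D ^ 2) * (uxx + uyy)
      + (p - 2) / 2 * (A * (2 * C * vxx + 2 * D * vxy) + B * (2 * C * vxy + 2 * D * vyy)) = 0 := by
  have i1 : (A ^ 2 + B ^ 2) ^ ((4 - p) / 2) * (A ^ 2 + B ^ 2) ^ ((p - 2) / 2 - 1) = 1 := by
    rw [← Real.rpow_add hs1, show (4 - p) / 2 + ((p - 2) / 2 - 1) = 0 by ring, Real.rpow_zero]
  have i2 : (A ^ 2 + B ^ 2) ^ ((4 - p) / 2) * (A ^ 2 + B ^ 2) ^ ((p - 2) / 2)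
      = A ^ 2 + B ^ 2 := by
    rw [← Real.rpow_add hs1, show (4 - p) / 2 + (p - 2) / 2 = 1 by ring, Real.rpow_one]
  have iw1 : w ^ ((4 - p) / 2) * w ^ ((p - 2) / 2 - 1) = 1 := by
    rw [← Real.rpow_add hw0, show (4 - p) / 2 + ((p - 2) / 2 - 1) = 0 by ring, Real.rpow_zero]
  have iw2 : w ^ ((4 - p) / 2) * w ^ ((p - 2) / 2) = w := by
    rw [← Real.rpow_add hw0, show (4 - p) / 2 + (p - 2) / 2 = 1 by ring, Real.rpow_one]
  linear_combination w ^ ((4 - p) / 2) * H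
    + ((p - 2) / 2) * ((2 * A * uxx + 2 * B * uxy) * A + (2 * A * uxy + 2 * B * uyy) * B) * i1
    + (uxx + uyy) * i2
    - ((p - 2) / 2) * ((2 * A * uxx + 2 * B * uxy + 2 * C * vxx + 2 * D * vxy) * A
        + (2 * A * uxy + 2 * B * uyy + 2 * C * vxy + 2 * D * vyy) * B) * iw1
    - (uxx + uyy) * iw2 - (uxx + uyy) * hw

/-- Let `u = (u¹, u²)` be a C² p-harmonic map on a planar domain, i.e.
`div(|Du|^{p-2} ∇u¹) = 0` and `div(|Du|^{p-2} ∇u²) = 0` where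
`|Du|² = |∇u¹|² + |∇u²|²`. Then at points where `∇u¹ ≠ 0` and `∇u² ≠ 0`:
`|∇u¹|^{4-p} Δ_p u¹ + |∇u²|² Δu¹ + ((p-2)/2) ⟨∇u¹, ∇|∇u²|²⟩ = 0`,
and symmetrically with the indices 1 and 2 swapped.  Divergences are
represented as sums of the partial derivatives of the flux components. -/
theorem p_harmonic_system_representation
    (p : ℝ) (hp : 1 < p)
    (u1 u1x u1y u1xx u1xy u1yy u2 u2x u2y u2xx u2xy u2yy : ℝ → ℝ → ℝ)
    (hu1x : ∀ x y, HasDerivAt (fun t => u1 t y) (u1x x y) x)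
    (hu1y : ∀ x y, HasDerivAt (fun t => u1 x t) (u1y x y) y)
    (hu1xx : ∀ x y, HasDerivAt (fun t => u1x t y) (u1xx x y) x)
    (hu1xy : ∀ x y, HasDerivAt (fun t => u1x x t) (u1xy x y) y)
    (hu1yx : ∀ x y, HasDerivAt (fun t => u1y t y) (u1xy x y) x)
    (hu1yy : ∀ x y, HasDerivAt (fun t => u1y x t) (u1yy x y) y)
    (hu2x : ∀ x y, HasDerivAt (fun t => u2 t y) (u2x x y) x)
    (hu2y : ∀ x y, HasDerivAt (fun t => u2 x t) (u2y x y) y)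
    (hu2xx : ∀ x y, HasDerivAt (fun t => u2x t y) (u2xx x y) x)
    (hu2xy : ∀ x y, HasDerivAt (fun t => u2x x t) (u2xy x y) y)
    (hu2yx : ∀ x y, HasDerivAt (fun t => u2y t y) (u2xy x y) x)
    (hu2yy : ∀ x y, HasDerivAt (fun t => u2y x t) (u2yy x y) y)
    -- p-harmonicity of u = (u¹,u²): div(|Du|^{p-2}∇u¹) = 0 and div(|Du|^{p-2}∇u²) = 0
    (hph1 : ∀ x y, ∀ a b : ℝ,
      HasDerivAt (fun t => ((u1x t y) ^ 2 + (u1y t y) ^ 2 + (u2x t y) ^ 2 + (u2y t y) ^ 2)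
        ^ ((p - 2) / 2) * u1x t y) a x →
      HasDerivAt (fun t => ((u1x x t) ^ 2 + (u1y x t) ^ 2 + (u2x x t) ^ 2 + (u2y x t) ^ 2)
        ^ ((p - 2) / 2) * u1y x t) b y → a + b = 0)
    (hph2 : ∀ x y, ∀ a b : ℝ,
      HasDerivAt (fun t => ((u1x t y) ^ 2 + (u1y t y) ^ 2 + (u2x t y) ^ 2 + (u2y t y) ^ 2)
        ^ ((p - 2) / 2) * u2x t y) a x →
      HasDerivAt (fun t => ((u1x x t) ^ 2 + (u1y x t) ^ 2 + (u2x x t) ^ 2 + (u2y x t) ^ 2)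
        ^ ((p - 2) / 2) * u2y x t) b y → a + b = 0)
    (x y : ℝ)
    (h01 : ¬(u1x x y = 0 ∧ u1y x y = 0)) (h02 : ¬(u2x x y = 0 ∧ u2y x y = 0)) :
    (∀ c d : ℝ,
      HasDerivAt (fun t => ((u1x t y) ^ 2 + (u1y t y) ^ 2) ^ ((p - 2) / 2) * u1x t y) c x →
      HasDerivAt (fun t => ((u1x x t) ^ 2 + (u1y x t) ^ 2) ^ ((p - 2) / 2) * u1y x t) d y →
      ((u1x x y) ^ 2 + (u1y x y) ^ 2) ^ ((4 - p) / 2) * (c + d)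
        + ((u2x x y) ^ 2 + (u2y x y) ^ 2) * (u1xx x y + u1yy x y)
        + (p - 2) / 2
          * (u1x x y * (2 * u2x x y * u2xx x y + 2 * u2y x y * u2xy x y)
            + u1y x y * (2 * u2x x y * u2xy x y + 2 * u2y x y * u2yy x y)) = 0)
    ∧ (∀ c d : ℝ,
      HasDerivAt (fun t => ((u2x t y) ^ 2 + (u2y t y) ^ 2) ^ ((p - 2) / 2) * u2x t y) c x →
      HasDerivAt (fun t => ((u2x x t) ^ 2 + (u2y x t) ^ 2) ^ ((p - 2) / 2) * u2y x t) d y →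
      ((u2x x y) ^ 2 + (u2y x y) ^ 2) ^ ((4 - p) / 2) * (c + d)
        + ((u1x x y) ^ 2 + (u1y x y) ^ 2) * (u2xx x y + u2yy x y)
        + (p - 2) / 2
          * (u2x x y * (2 * u1x x y * u1xx x y + 2 * u1y x y * u1xy x y)
            + u2y x y * (2 * u1x x y * u1xy x y + 2 * u1y x y * u1yy x y)) = 0) := by
  have hs1 : 0 < u1x x y ^ 2 + u1y x y ^ 2 := by
    rcases not_and_or.mp h01 with h | h <;> positivity
  have hs2 : 0 < u2x x y ^ 2 + u2y x y ^ 2 := by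
    rcases not_and_or.mp h02 with h | h <;> positivity
  have hw0 : 0 < u1x x y ^ 2 + u1y x y ^ 2 + u2x x y ^ 2 + u2y x y ^ 2 := by positivity
  -- derivatives of |Du|² in each direction
  have hWx : HasDerivAt
      (fun t => (u1x t y) ^ 2 + (u1y t y) ^ 2 + (u2x t y) ^ 2 + (u2y t y) ^ 2)
      ((2 : ℕ) * u1x x y ^ 1 * u1xx x y + (2 : ℕ) * u1y x y ^ 1 * u1xy x y
        + (2 : ℕ) * u2x x y ^ 1 * u2xx x y + (2 : ℕ) * u2y x y ^ 1 * u2xy x y) x :=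
    ((((hu1xx x y).pow 2).add ((hu1yx x y).pow 2)).add ((hu2xx x y).pow 2)).add
      ((hu2yx x y).pow 2)
  have hWy : HasDerivAt
      (fun t => (u1x x t) ^ 2 + (u1y x t) ^ 2 + (u2x x t) ^ 2 + (u2y x t) ^ 2)
      ((2 : ℕ) * u1x x y ^ 1 * u1xy x y + (2 : ℕ) * u1y x y ^ 1 * u1yy x y
        + (2 : ℕ) * u2x x y ^ 1 * u2xy x y + (2 : ℕ) * u2y x y ^ 1 * u2yy x y) y :=
    ((((hu1xy x y).pow 2).add ((hu1yy x y).pow 2)).add ((hu2xy x y).pow 2)).add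
      ((hu2yy x y).pow 2)
  have hS1x : HasDerivAt (fun t => (u1x t y) ^ 2 + (u1y t y) ^ 2)
      ((2 : ℕ) * u1x x y ^ 1 * u1xx x y + (2 : ℕ) * u1y x y ^ 1 * u1xy x y) x :=
    ((hu1xx x y).pow 2).add ((hu1yx x y).pow 2)
  have hS1y : HasDerivAt (fun t => (u1x x t) ^ 2 + (u1y x t) ^ 2)
      ((2 : ℕ) * u1x x y ^ 1 * u1xy x y + (2 : ℕ) * u1y x y ^ 1 * u1yy x y) y :=
    ((hu1xy x y).pow 2).add ((hu1yy x y).pow 2)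
  have hS2x : HasDerivAt (fun t => (u2x t y) ^ 2 + (u2y t y) ^ 2)
      ((2 : ℕ) * u2x x y ^ 1 * u2xx x y + (2 : ℕ) * u2y x y ^ 1 * u2xy x y) x :=
    ((hu2xx x y).pow 2).add ((hu2yx x y).pow 2)
  have hS2y : HasDerivAt (fun t => (u2x x t) ^ 2 + (u2y x t) ^ 2)
      ((2 : ℕ) * u2x x y ^ 1 * u2xy x y + (2 : ℕ) * u2y x y ^ 1 * u2yy x y) y :=
    ((hu2xy x y).pow 2).add ((hu2yy x y).pow 2)
  -- p-harmonic system, expanded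
  have ha1 := (hWx.rpow_const (p := (p - 2) / 2) (Or.inl hw0.ne')).mul (hu1xx x y)
  have hb1 := (hWy.rpow_const (p := (p - 2) / 2) (Or.inl hw0.ne')).mul (hu1yy x y)
  have ha2 := (hWx.rpow_const (p := (p - 2) / 2) (Or.inl hw0.ne')).mul (hu2xx x y)
  have hb2 := (hWy.rpow_const (p := (p - 2) / 2) (Or.inl hw0.ne')).mul (hu2yy x y)
  have hH1 := hph1 x y _ _ ha1 hb1
  have hH2 := hph2 x y _ _ ha2 hb2
  constructor
  · intro c d hc hd
    have hc' := (hS1x.rpow_const (p := (p - 2) / 2) (Or.inl hs1.ne')).mul (hu1xx x y)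
    have hd' := (hS1y.rpow_const (p := (p - 2) / 2) (Or.inl hs1.ne')).mul (hu1yy x y)
    have hcc : c = _ := hc.unique hc'
    have hdd : d = _ := hd.unique hd'
    rw [hcc, hdd]
    have key := p_harm_key_alg p (u1x x y) (u1y x y) (u2x x y) (u2y x y)
      (u1xx x y) (u1xy x y) (u1yy x y) (u2xx x y) (u2xy x y) (u2yy x y)
      (u1x x y ^ 2 + u1y x y ^ 2 + u2x x y ^ 2 + u2y x y ^ 2)
      hs1 hw0 (by ring) (by linear_combination hH1)
    linear_combination key
  · intro c d hc hd
    have hc' := (hS2x.rpow_const (p := (p - 2) / 2) (Or.inl hs2.ne')).mul (hu2xx x y)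
    have hd' := (hS2y.rpow_const (p := (p - 2) / 2) (Or.inl hs2.ne')).mul (hu2yy x y)
    have hcc : c = _ := hc.unique hc'
    have hdd : d = _ := hd.unique hd'
    rw [hcc, hdd]
    have key := p_harm_key_alg p (u2x x y) (u2y x y) (u1x x y) (u1y x y)
      (u2xx x y) (u2xy x y) (u2yy x y) (u1xx x y) (u1xy x y) (u1yy x y)
      (u1x x y ^ 2 + u1y x y ^ 2 + u2x x y ^ 2 + u2y x y ^ 2)
      hs2 hw0 (by ring) (by linear_combination hH2)
    linear_combination key
end

section
/- Let v be a C² function with complex gradient f = (v_x − i v_y)/2, and suppose f ≠ 0 at a point. Then the level-curve curvature satisfies 2|f| k_v = −2 f_{\bar z} + (f/\bar f) \overline{f_z} + (\bar f/f) f_z. In particular |f| |k_v| ≤ |f_{\bar z}| + |f_z|. -/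
/-- Let `v` be C² with complex gradient `f = (v_x − i v_y)/2 ≠ 0` at a point.
Then the level-curve curvature satisfies
`2|f| k_v = −2 f_z̄ + (f/conj f) conj f_z + (conj f/f) f_z`.
In particular `|f| |k_v| ≤ |f_z̄| + |f_z|`. -/
theorem level_curve_curvature_complex
    (v vx vy vxx vxy vyy : ℝ → ℝ → ℝ)
    (hvx : ∀ x y, HasDerivAt (fun t => v t y) (vx x y) x)
    (hvy : ∀ x y, HasDerivAt (fun t => v x t) (vy x y) y)
    (hvxx : ∀ x y, HasDerivAt (fun t => vx t y) (vxx x y) x)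
    (hvxy : ∀ x y, HasDerivAt (fun t => vx x t) (vxy x y) y)
    (hvyx : ∀ x y, HasDerivAt (fun t => vy t y) (vxy x y) x)
    (hvyy : ∀ x y, HasDerivAt (fun t => vy x t) (vyy x y) y)
    (x y : ℝ) (f fz fzb : ℂ)
    (hf : f = ((vx x y : ℂ) - Complex.I * (vy x y : ℂ)) / 2)
    (hf0 : f ≠ 0)
    (hfz : fz = ((vxx x y : ℂ) - (vyy x y : ℂ) - 2 * Complex.I * (vxy x y : ℂ)) / 4)
    (hfzb : fzb = ((vxx x y : ℂ) + (vyy x y : ℂ)) / 4)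
    (k : ℝ)
    (hk : k = -(((vy x y) ^ 2 * vxx x y - 2 * vx x y * vy x y * vxy x y
        + (vx x y) ^ 2 * vyy x y) / (Real.sqrt ((vx x y) ^ 2 + (vy x y) ^ 2)) ^ 3)) :
    ((2 * ‖f‖ * k : ℝ) : ℂ)
        = -2 * fzb + (f / (starRingEnd ℂ) f) * (starRingEnd ℂ) fz
          + ((starRingEnd ℂ) f / f) * fz
    ∧ ‖f‖ * |k| ≤ ‖fzb‖ + ‖fz‖ := by
  set a := vx x y with ha
  set b := vy x y with hb
  set p := vxx x y with hp
  set q := vxy x y with hq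
  set r := vyy x y with hr
  have hab : a ^ 2 + b ^ 2 ≠ 0 := by
    intro h
    apply hf0
    have ha0 : a = 0 := by nlinarith [sq_nonneg a, sq_nonneg b]
    have hb0 : b = 0 := by nlinarith [sq_nonneg a, sq_nonneg b]
    rw [hf, ha0, hb0]; simp
  have habpos : 0 < a ^ 2 + b ^ 2 := lt_of_le_of_ne (by positivity) (Ne.symm hab)
  have hs2 : Real.sqrt (a ^ 2 + b ^ 2) ^ 2 = a ^ 2 + b ^ 2 := Real.sq_sqrt habpos.le
  have hspos : 0 < Real.sqrt (a ^ 2 + b ^ 2) := Real.sqrt_pos.mpr habpos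
  have habs : ‖f‖ = Real.sqrt (a ^ 2 + b ^ 2) / 2 := by
    have hsq : ‖f‖ ^ 2 = (Real.sqrt (a ^ 2 + b ^ 2) / 2) ^ 2 := by
      rw [Complex.sq_norm, hf, div_pow, hs2]
      simp [Complex.normSq_apply]
      ring
    nlinarith [norm_nonneg f, hspos]
  have hL : 2 * ‖f‖ * k = -((b ^ 2 * p - 2 * a * b * q + a ^ 2 * r) / (a ^ 2 + b ^ 2)) := by
    rw [habs, hk]
    rw [show (Real.sqrt (a ^ 2 + b ^ 2)) ^ 3
        = (a ^ 2 + b ^ 2) * Real.sqrt (a ^ 2 + b ^ 2) by rw [pow_succ, hs2]]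
    field_simp
  have hconj : (starRingEnd ℂ) f = ((a : ℂ) + Complex.I * b) / 2 := by
    rw [hf]
    simp [map_div₀, Complex.conj_I, map_ofNat]
  have hcfz : (starRingEnd ℂ) fz = ((p : ℂ) - r + 2 * Complex.I * q) / 4 := by
    rw [hfz]
    simp [map_div₀, Complex.conj_I, map_ofNat]
  have hfne : ((a : ℂ) - Complex.I * b) / 2 ≠ 0 := hf ▸ hf0
  have hcne : ((a : ℂ) + Complex.I * b) / 2 ≠ 0 := hconj ▸ (map_ne_zero (starRingEnd ℂ)).mpr hf0
  have habC : ((a : ℂ) ^ 2 + (b : ℂ) ^ 2) ≠ 0 := by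
    intro h; apply hab; exact_mod_cast h
  have hmain : ((2 * ‖f‖ * k : ℝ) : ℂ)
      = -2 * fzb + (f / (starRingEnd ℂ) f) * (starRingEnd ℂ) fz
        + ((starRingEnd ℂ) f / f) * fz := by
    rw [hL, hfzb, hconj, hcfz, hfz, hf]
    have h1 : ((a : ℂ) - Complex.I * b) ≠ 0 := by
      intro h; apply hfne; rw [h]; simp
    have h2 : ((a : ℂ) + Complex.I * b) ≠ 0 := by
      intro h; apply hcne; rw [h]; simp
    push_cast
    field_simp
    have h1' : ((a : ℂ) - b * Complex.I) ≠ 0 := by rwa [mul_comm]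
    have h2' : ((a : ℂ) + b * Complex.I) ≠ 0 := by rwa [mul_comm]
    field_simp
    ring_nf
    simp [Complex.ext_iff]
    constructor <;> ring
  refine ⟨hmain, ?_⟩
  have hane : ‖f‖ ≠ 0 := norm_ne_zero_iff.mpr hf0
  have e1 : ‖(f / (starRingEnd ℂ) f * (starRingEnd ℂ) fz)‖ = ‖fz‖ := by
    rw [norm_mul, norm_div, Complex.norm_conj, Complex.norm_conj, div_self hane, one_mul]
  have e2 : ‖((starRingEnd ℂ) f / f * fz)‖ = ‖fz‖ := by
    rw [norm_mul, norm_div, Complex.norm_conj, div_self hane, one_mul]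
  have e3 : ‖(-2 * fzb)‖ = 2 * ‖fzb‖ := by
    rw [norm_mul]; simp
  have tri : ‖(-2 * fzb + (f / (starRingEnd ℂ) f) * (starRingEnd ℂ) fz
      + ((starRingEnd ℂ) f / f) * fz)‖
      ≤ 2 * ‖fzb‖ + ‖fz‖ + ‖fz‖ := by
    calc ‖(-2 * fzb + (f / (starRingEnd ℂ) f) * (starRingEnd ℂ) fz
        + ((starRingEnd ℂ) f / f) * fz)‖
        ≤ ‖(-2 * fzb + (f / (starRingEnd ℂ) f) * (starRingEnd ℂ) fz)‖
          + ‖(((starRingEnd ℂ) f / f) * fz)‖ := norm_add_le _ _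
      _ ≤ ‖(-2 * fzb)‖ + ‖((f / (starRingEnd ℂ) f) * (starRingEnd ℂ) fz)‖
          + ‖(((starRingEnd ℂ) f / f) * fz)‖ := by
            gcongr; exact norm_add_le _ _
      _ = 2 * ‖fzb‖ + ‖fz‖ + ‖fz‖ := by rw [e1, e2, e3]
  have habs2 : ‖((2 * ‖f‖ * k : ℝ) : ℂ)‖ = 2 * ‖f‖ * |k| := by
    rw [Complex.norm_real, Real.norm_eq_abs, abs_mul, abs_mul]
    simp [abs_of_nonneg (norm_nonneg f)]
  rw [hmain] at habs2
  linarith [tri, habs2.symm.le, habs2.le]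
end
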